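/- Let p ≡ 3 (mod 4), p > 4ℓ for a prime ℓ ≠ p, and O = Z + Zi + Z(1+j)/2 + Z(i+k)/2 (i^2 = −1, j^2 = −p). If a, b ∈ O satisfy Nrd(a) + Nrd(b) = ℓ, then a, b ∈ Z[i]. -/

import Mathlib

open Quaternion

/-- The quaternion `i` in `B_{p,∞} = ℍ[ℚ, −1, −p]`. -/
def qi (p : ℕ) : ℍ[ℚ, -1, -(p : ℚ)] := ⟨0, 1, 0, 0⟩

/-- The quaternion `j` in `B_{p,∞} = ℍ[ℚ, −1, −p]`. -/
def qj (p : ℕ) : ℍ[ℚ, -1, -(p : ℚ)] := ⟨0, 0, 1, 0⟩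

/-- The quaternion `k = ij` in `B_{p,∞} = ℍ[ℚ, −1, −p]`. -/
def qk (p : ℕ) : ℍ[ℚ, -1, -(p : ℚ)] := qi p * qj p

/-- Membership in the maximal order `O = Z + Zi + Z(1+j)/2 + Z(i+k)/2`. -/
def memO1728 (p : ℕ) (α : ℍ[ℚ, -1, -(p : ℚ)]) : Prop :=
  ∃ x y z w : ℤ, α = (x : ℚ) • 1 + (y : ℚ) • qi p + ((z : ℚ) / 2) • (1 + qj p)
    + ((w : ℚ) / 2) • (qi p + qk p)

/-- Membership in the subring `Z[i]` of `ℍ[ℚ, −1, −p]`. -/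
def memZi (p : ℕ) (α : ℍ[ℚ, -1, -(p : ℚ)]) : Prop :=
  ∃ m n : ℤ, α = (m : ℚ) • 1 + (n : ℚ) • qi p


lemma nrd_formula (p : ℕ) (x y z w : ℤ) :
    ((((x : ℚ) • 1 + (y : ℚ) • qi p + ((z : ℚ) / 2) • (1 + qj p)
    + ((w : ℚ) / 2) • (qi p + qk p)) * star ((x : ℚ) • 1 + (y : ℚ) • qi p + ((z : ℚ) / 2) • (1 + qj p)
    + ((w : ℚ) / 2) • (qi p + qk p))).re : ℚ)
    = ((x:ℚ)+z/2)^2 + ((y:ℚ)+w/2)^2 + p*((z:ℚ)^2+(w:ℚ)^2)/4 := by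
  simp [qi, qj, qk, QuaternionAlgebra.ext_iff, QuaternionAlgebra.re_mul]
  ring

lemma int_sq_zero (z w : ℤ) (h : (z:ℚ)^2 + (w:ℚ)^2 < 1) : z = 0 ∧ w = 0 := by
  have h' : z^2 + w^2 < 1 := by exact_mod_cast h
  constructor <;> nlinarith [sq_nonneg z, sq_nonneg w]

/-- Let `p ≡ 3 (mod 4)` and `p > 4ℓ` for a prime `ℓ ≠ p`. If `a, b` in the maximal order
`O = Z + Zi + Z(1+j)/2 + Z(i+k)/2` satisfy `Nrd(a) + Nrd(b) = ℓ`, then `a, b ∈ Z[i]`. -/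
theorem small_norm_in_Zi (p ℓ : ℕ) (hp : p.Prime) (hℓ : ℓ.Prime) (hne : ℓ ≠ p)
    (hp4 : p % 4 = 3) (hpl : 4 * ℓ < p)
    (a b : ℍ[ℚ, -1, -(p : ℚ)]) (ha : memO1728 p a) (hb : memO1728 p b)
    (hnorm : (a * star a).re + (b * star b).re = (ℓ : ℚ)) :
    memZi p a ∧ memZi p b := by
  obtain ⟨xa, ya, za, wa, rfl⟩ := ha
  obtain ⟨xb, yb, zb, wb, rfl⟩ := hb
  rw [nrd_formula, nrd_formula] at hnorm
  have hp' : (4 * ℓ : ℚ) < p := by exact_mod_cast hpl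
  have hp0 : (0:ℚ) < p := by exact_mod_cast hp.pos
  have h1 : (za:ℚ)^2 + (wa:ℚ)^2 < 1 := by
    nlinarith [sq_nonneg ((xa:ℚ)+za/2), sq_nonneg ((ya:ℚ)+wa/2),
      sq_nonneg ((xb:ℚ)+zb/2), sq_nonneg ((yb:ℚ)+wb/2),
      sq_nonneg (zb:ℚ), sq_nonneg (wb:ℚ), mul_nonneg hp0.le (by positivity : (0:ℚ) ≤ (zb:ℚ)^2+(wb:ℚ)^2)]
  have h2 : (zb:ℚ)^2 + (wb:ℚ)^2 < 1 := by
    nlinarith [sq_nonneg ((xa:ℚ)+za/2), sq_nonneg ((ya:ℚ)+wa/2),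
      sq_nonneg ((xb:ℚ)+zb/2), sq_nonneg ((yb:ℚ)+wb/2),
      sq_nonneg (za:ℚ), sq_nonneg (wa:ℚ), mul_nonneg hp0.le (by positivity : (0:ℚ) ≤ (za:ℚ)^2+(wa:ℚ)^2)]
  obtain ⟨hza, hwa⟩ := int_sq_zero _ _ h1
  obtain ⟨hzb, hwb⟩ := int_sq_zero _ _ h2
  subst hza hwa hzb hwb
  constructor
  · exact ⟨xa, ya, by simp⟩
  · exact ⟨xb, yb, by simp⟩
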